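/- Let M be a metric space. If M is unbounded or not uniformly discrete, then M has the sequential strong long trapezoid property (seq-SLTP). -/

import Mathlib

/-- A metric space `M` has the *sequential strong long trapezoid property* (seq-SLTP) if for
every `ε > 0` there exist pairwise disjoint subsets `A 0, A 1, …` of `M` such that, for every
`m`, there are `u, v ∈ A m` with `u ≠ v` satisfying the long trapezoid inequalities for all
points outside `A m`. -/
def SeqSLTP (M : Type*) [MetricSpace M] : Prop :=
  ∀ ε : ℝ, 0 < ε → ∃ A : ℕ → Set M,
    (Pairwise fun m k => Disjoint (A m) (A k)) ∧
    ∀ m : ℕ, ∃ u ∈ A m, ∃ v ∈ A m, u ≠ v ∧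
      (∀ x ∉ A m, ∀ y ∉ A m,
        (1 - ε) * (dist x y + dist u v) ≤ dist x u + dist y v) ∧
      (∀ x ∉ A m, ∀ y ∉ A m, ∀ z ∉ A m, ∀ w ∉ A m,
        (1 - ε) * (dist x y + dist z w + 2 * dist u v) ≤
          dist x u + dist y u + dist z v + dist w v)

/-- The body of `SeqSLTP` for a fixed `ε`. -/
def SLTPBody (M : Type*) [MetricSpace M] (ε : ℝ) : Prop :=
  ∃ A : ℕ → Set M,
    (Pairwise fun m k => Disjoint (A m) (A k)) ∧
    ∀ m : ℕ, ∃ u ∈ A m, ∃ v ∈ A m, u ≠ v ∧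
      (∀ x ∉ A m, ∀ y ∉ A m,
        (1 - ε) * (dist x y + dist u v) ≤ dist x u + dist y v) ∧
      (∀ x ∉ A m, ∀ y ∉ A m, ∀ z ∉ A m, ∀ w ∉ A m,
        (1 - ε) * (dist x y + dist z w + 2 * dist u v) ≤
          dist x u + dist y u + dist z v + dist w v)

lemma sltp_master {M : Type*} [MetricSpace M] (ε : ℝ) (hε : 0 < ε) (hε2 : ε ≤ 1/2)
    (φ : ℕ → M → ℝ) (u v : ℕ → M) (L H : ℕ → ℝ)
    (hd1 : ∀ m x y, dist x y ≤ φ m x + φ m y)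
    (hd2 : ∀ m x y, φ m x - φ m y ≤ dist x y)
    (huv : ∀ m, u m ≠ v m)
    (hu1 : ∀ m, L m < φ m (u m)) (hu2 : ∀ m, φ m (u m) < H m)
    (hv1 : ∀ m, L m < φ m (v m)) (hv2 : ∀ m, φ m (v m) < H m)
    (hLu : ∀ m, 2 * L m ≤ ε * φ m (u m)) (hLv : ∀ m, 2 * L m ≤ ε * φ m (v m))
    (hHu : ∀ m, 2 * φ m (u m) ≤ ε * H m) (hHv : ∀ m, 2 * φ m (v m) ≤ ε * H m)
    (hdisj : Pairwise fun m k =>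
      Disjoint {x : M | L m < φ m x ∧ φ m x < H m} {x : M | L k < φ k x ∧ φ k x < H k}) :
    SLTPBody M ε := by
  have hφ0 : ∀ m (x : M), 0 ≤ φ m x := by
    intro m x
    have := hd1 m x x
    simp only [dist_self] at this
    linarith
  refine ⟨fun m => {x | L m < φ m x ∧ φ m x < H m}, hdisj, fun m => ?_⟩
  have key : ∀ x : M, x ∉ {x : M | L m < φ m x ∧ φ m x < H m} → ∀ w : M,
      2 * L m ≤ ε * φ m w → 2 * φ m w ≤ ε * H m →
      (1 - ε) * (φ m x + φ m w) ≤ dist x w := by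
    intro x hx w h3 h4
    rcases not_and_or.1 hx with hc | hc
    · push_neg at hc
      have hxw := hd2 m w x
      rw [dist_comm w x] at hxw
      nlinarith [hφ0 m x, hφ0 m w]
    · push_neg at hc
      have hxw := hd2 m x w
      nlinarith [hφ0 m x, hφ0 m w]
  have h1ε : (0:ℝ) ≤ 1 - ε := by linarith
  refine ⟨u m, ⟨hu1 m, hu2 m⟩, v m, ⟨hv1 m, hv2 m⟩, huv m, ?_, ?_⟩
  · intro x hx y hy
    have k1 := key x hx (u m) (hLu m) (hHu m)
    have k2 := key y hy (v m) (hLv m) (hHv m)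
    have t1 := mul_le_mul_of_nonneg_left (hd1 m x y) h1ε
    have t2 := mul_le_mul_of_nonneg_left (hd1 m (u m) (v m)) h1ε
    nlinarith
  · intro x hx y hy z hz w hw
    have k1 := key x hx (u m) (hLu m) (hHu m)
    have k2 := key y hy (u m) (hLu m) (hHu m)
    have k3 := key z hz (v m) (hLv m) (hHv m)
    have k4 := key w hw (v m) (hLv m) (hHv m)
    have t1 := mul_le_mul_of_nonneg_left (hd1 m x y) h1ε
    have t2 := mul_le_mul_of_nonneg_left (hd1 m z w) h1ε
    have t3 := mul_le_mul_of_nonneg_left (hd1 m (u m) (v m)) h1ε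
    nlinarith

lemma sltp_unbounded {M : Type*} [MetricSpace M] (ε : ℝ) (hε : 0 < ε) (hε2 : ε ≤ 1/2)
    (hU : ∀ r : ℝ, 0 < r → ∃ x y : M, r < dist x y) : SLTPBody M ε := by
  obtain ⟨x0, y0, -⟩ := hU 1 one_pos
  have hz : ∀ r : ℝ, ∃ z : M, r < dist x0 z := by
    intro r
    obtain ⟨x, y, hxy⟩ := hU (2 * |r| + 2) (by positivity)
    have habs : r ≤ |r| := le_abs_self r
    by_cases hc : |r| + 1 < dist x0 x
    · exact ⟨x, by linarith⟩
    · refine ⟨y, ?_⟩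
      push_neg at hc
      have t : dist x y ≤ dist x0 x + dist x0 y := dist_triangle_left x y x0
      linarith
  choose z hzs using hz
  set step : ℝ → ℝ := fun l => 2 * dist x0 (z (dist x0 (z (2 * l / ε)))) / ε with hstep
  set Ls : ℕ → ℝ := fun n => step^[n] 0 with hLs
  set U : ℕ → M := fun n => z (2 * Ls n / ε) with hU'
  set V : ℕ → M := fun n => z (dist x0 (U n)) with hV
  have hsucc : ∀ n, Ls (n + 1) = 2 * dist x0 (V n) / ε := by
    intro n
    show step^[n+1] 0 = 2 * dist x0 (V n) / ε
    rw [Function.iterate_succ_apply']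
  have hLpos : ∀ n, 0 ≤ Ls n := by
    intro n
    induction n with
    | zero => simp [hLs]
    | succ n ih =>
      rw [hsucc n]
      positivity
  have hu_lb : ∀ n, 2 * Ls n / ε < dist x0 (U n) := fun n => hzs _
  have hv_lb : ∀ n, dist x0 (U n) < dist x0 (V n) := fun n => hzs _
  have hu_pos : ∀ n, 0 < dist x0 (U n) := by
    intro n
    have h1 := hu_lb n
    have h2 := hLpos n
    have h3 : 0 ≤ 2 * Ls n / ε := by positivity
    linarith
  have hLlt : ∀ n, Ls n < dist x0 (U n) := by
    intro n
    have h1 := hu_lb n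
    have h2 := hLpos n
    have : Ls n ≤ 2 * Ls n / ε := by
      rw [le_div_iff₀ hε]
      nlinarith
    linarith
  have hmono : StrictMono Ls := by
    apply strictMono_nat_of_lt_succ
    intro n
    rw [hsucc n]
    have h1 := hLlt n
    have h2 := hv_lb n
    have h3 := hu_pos n
    rw [lt_div_iff₀ hε]
    nlinarith
  apply sltp_master ε hε hε2 (fun _ x => dist x0 x) U V Ls (fun n => Ls (n+1))
  · intro m x y
    exact dist_triangle_left x y x0
  · intro m x y
    have h1 := dist_triangle x0 y x
    rw [dist_comm y x] at h1
    linarith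
  · intro n h
    have := hv_lb n
    rw [h] at this
    exact lt_irrefl _ this
  · exact hLlt
  · intro n
    rw [hsucc n, lt_div_iff₀ hε]
    have h1 := hv_lb n
    have h2 := hu_pos n
    nlinarith
  · intro n
    have h1 := hLlt n
    have h2 := hv_lb n
    linarith
  · intro n
    rw [hsucc n, lt_div_iff₀ hε]
    have h1 := hv_lb n
    have h2 := hu_pos n
    nlinarith
  · intro n
    have := hu_lb n
    rw [div_lt_iff₀ hε] at this
    nlinarith
  · intro n
    have h0 := hu_lb n
    rw [div_lt_iff₀ hε] at h0
    have h1 := hv_lb n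
    nlinarith
  · intro n
    rw [hsucc n]
    have h1 := hv_lb n
    field_simp
    linarith
  · intro n
    rw [hsucc n]
    field_simp
    exact le_rfl
  · have hdlt : ∀ m k, m < k → Disjoint {x : M | Ls m < dist x0 x ∧ dist x0 x < Ls (m+1)}
        {x : M | Ls k < dist x0 x ∧ dist x0 x < Ls (k+1)} := by
      intro m k hmk
      rw [Set.disjoint_left]
      rintro a ⟨-, ha2⟩ ⟨hb1, -⟩
      have : Ls (m+1) ≤ Ls k := hmono.monotone hmk
      linarith
    intro m k hmk
    rcases hmk.lt_or_gt with h | h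
    · exact hdlt m k h
    · exact (hdlt k m h).symm

open UniformSpace in
lemma sltp_cluster {M : Type*} [MetricSpace M] (ε : ℝ) (hε : 0 < ε) (hε2 : ε ≤ 1/2)
    (ω : Completion M)
    (hcl : ∀ r : ℝ, 0 < r → ∃ x : M,
      0 < dist (↑x : Completion M) ω ∧ dist (↑x : Completion M) ω < r) :
    SLTPBody M ε := by
  have hcl' : ∀ r : ℝ, ∃ x : M, 0 < dist (↑x : Completion M) ω ∧
      (0 < r → dist (↑x : Completion M) ω < r) := by
    intro r
    by_cases hr : 0 < r
    · obtain ⟨x, h1, h2⟩ := hcl r hr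
      exact ⟨x, h1, fun _ => h2⟩
    · obtain ⟨x, h1, h2⟩ := hcl 1 one_pos
      exact ⟨x, h1, fun h => absurd h hr⟩
  choose g hg1 hg2 using hcl'
  set φ : M → ℝ := fun x => dist (↑x : Completion M) ω with hφ
  set step : ℝ → ℝ := fun H => ε * φ (g (φ (g (ε * H / 2)))) / 4 with hstep
  set Hs : ℕ → ℝ := fun n => step^[n] 1 with hHs
  set U : ℕ → M := fun n => g (ε * Hs n / 2) with hU
  set V : ℕ → M := fun n => g (φ (U n)) with hV
  have hsucc : ∀ n, Hs (n+1) = ε * φ (V n) / 4 := by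
    intro n
    show step^[n+1] 1 = _
    rw [Function.iterate_succ_apply']
  have hupos : ∀ n, 0 < φ (U n) := fun n => hg1 _
  have hvpos : ∀ n, 0 < φ (V n) := fun n => hg1 _
  have hHpos : ∀ n, 0 < Hs n := by
    intro n
    induction n with
    | zero => simp [hHs]
    | succ n ih =>
      rw [hsucc n]
      have := hvpos n
      positivity
  have hu_ub : ∀ n, φ (U n) < ε * Hs n / 2 := by
    intro n
    refine hg2 _ ?_
    have := hHpos n
    positivity
  have hv_ub : ∀ n, φ (V n) < φ (U n) := fun n => hg2 _ (hupos n)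
  have hanti : StrictAnti Hs := by
    apply strictAnti_nat_of_succ_lt
    intro n
    rw [hsucc n]
    have h1 := hv_ub n
    have h2 := hu_ub n
    have h3 := hvpos n
    have h4 := hHpos n
    nlinarith
  have hd1 : ∀ (x y : M), dist x y ≤ φ x + φ y := by
    intro x y
    have h1 : dist x y = dist (↑x : Completion M) (↑y) := (Completion.dist_eq x y).symm
    have h2 := dist_triangle (↑x : Completion M) ω (↑y)
    rw [dist_comm ω (↑y : Completion M)] at h2
    rw [h1]
    exact h2
  have hd2 : ∀ (x y : M), φ x - φ y ≤ dist x y := by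
    intro x y
    have h1 : dist x y = dist (↑x : Completion M) (↑y) := (Completion.dist_eq x y).symm
    have h2 := dist_triangle (↑x : Completion M) (↑y) ω
    rw [h1]
    linarith
  apply sltp_master ε hε hε2 (fun _ x => φ x) U V (fun n => Hs (n+1)) Hs
  · exact fun _ => hd1
  · exact fun _ => hd2
  · intro n h
    have h1 := hv_ub n
    rw [h] at h1
    exact lt_irrefl _ h1
  · intro n
    rw [hsucc n]
    have h1 := hv_ub n
    have h2 := hvpos n
    nlinarith
  · intro n
    have h1 := hu_ub n
    have h2 := hHpos n
    nlinarith
  · intro n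
    rw [hsucc n]
    have h2 := hvpos n
    nlinarith
  · intro n
    have h1 := hv_ub n
    have h2 := hu_ub n
    have h3 := hHpos n
    nlinarith
  · intro n
    rw [hsucc n]
    have h1 := hv_ub n
    have h2 := hvpos n
    nlinarith
  · intro n
    rw [hsucc n]
    have h2 := hvpos n
    nlinarith
  · intro n
    have h1 := hu_ub n
    nlinarith
  · intro n
    have h1 := hv_ub n
    have h2 := hu_ub n
    nlinarith
  · have hdlt : ∀ m k, m < k → Disjoint {x : M | Hs (m+1) < φ x ∧ φ x < Hs m}
        {x : M | Hs (k+1) < φ x ∧ φ x < Hs k} := by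
      intro m k hmk
      rw [Set.disjoint_left]
      rintro a ⟨ha1, -⟩ ⟨-, hb2⟩
      have : Hs k ≤ Hs (m+1) := hanti.antitone hmk
      linarith
    intro m k hmk
    rcases hmk.lt_or_gt with h | h
    · exact hdlt m k h
    · exact (hdlt k m h).symm

lemma sltp_separated {M : Type*} [MetricSpace M] (ε : ℝ) (hε : 0 < ε) (hε2 : ε ≤ 1/2)
    (η : ℝ) (hη : 0 < η)
    (hsel : ∀ P : Finset M, ∃ a b : M, a ≠ b ∧ dist a b < ε * η / 8 ∧ ∀ p ∈ P, η ≤ dist a p) :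
    SLTPBody M ε := by
  classical
  choose f1 f2 hne hsmall hfar using hsel
  set step : Finset M → Finset M := fun P => insert (f1 P) P with hstep
  set Ps : ℕ → Finset M := fun n => step^[n] ∅ with hPs
  set U : ℕ → M := fun n => f1 (Ps n) with hU
  set V : ℕ → M := fun n => f2 (Ps n) with hV
  have hsucc : ∀ n, Ps (n+1) = insert (U n) (Ps n) := by
    intro n
    show step^[n+1] ∅ = _
    rw [Function.iterate_succ_apply']
  have hmem : ∀ m k, m < k → U m ∈ Ps k := by
    intro m k hmk
    induction k with
    | zero => omega
    | succ k ih =>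
      rw [hsucc k]
      rcases Nat.lt_succ_iff_lt_or_eq.1 hmk with h | h
      · exact Finset.mem_insert_of_mem (ih h)
      · subst h
        exact Finset.mem_insert_self _ _
  have hsep : ∀ m k, m < k → η ≤ dist (U k) (U m) := fun m k h => hfar (Ps k) (U m) (hmem m k h)
  have hd : ∀ n, 0 < dist (U n) (V n) := fun n => dist_pos.2 (hne (Ps n))
  apply sltp_master ε hε hε2 (fun m x => dist (U m) x) U V (fun _ => -1)
    (fun m => 2 * dist (U m) (V m) / ε)
  · intro m x y
    exact dist_triangle_left x y (U m)
  · intro m x y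
    have h1 := dist_triangle (U m) y x
    rw [dist_comm y x] at h1
    linarith
  · exact fun n => hne (Ps n)
  · intro n
    simp [dist_self]
  · intro n
    rw [dist_self]
    exact div_pos (by nlinarith [hd n]) hε
  · intro n
    have := hd n
    linarith
  · intro n
    rw [lt_div_iff₀ hε]
    have := hd n
    nlinarith
  · intro n
    rw [dist_self]
    linarith
  · intro n
    nlinarith [mul_pos hε (hd n)]
  · intro n
    rw [dist_self, mul_zero]
    have h1 := hd n
    have h2 : 0 < 2 * dist (U n) (V n) / ε := div_pos (by nlinarith) hε
    nlinarith
  · intro n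
    have heq : ε * (2 * dist (U n) (V n) / ε) = 2 * dist (U n) (V n) := by
      field_simp
    rw [heq]
  · have hrad : ∀ n, 2 * dist (U n) (V n) / ε < η / 4 := by
      intro n
      rw [div_lt_iff₀ hε]
      have := hsmall (Ps n)
      nlinarith
    have hdlt : ∀ m k, m < k →
        Disjoint {x : M | -1 < dist (U m) x ∧ dist (U m) x < 2 * dist (U m) (V m) / ε}
          {x : M | -1 < dist (U k) x ∧ dist (U k) x < 2 * dist (U k) (V k) / ε} := by
      intro m k hmk
      rw [Set.disjoint_left]
      rintro a ⟨-, ha2⟩ ⟨-, hb2⟩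
      have h1 := hsep m k hmk
      have h2 := hrad m
      have h3 := hrad k
      have h4 := dist_triangle (U k) a (U m)
      rw [dist_comm a (U m)] at h4
      linarith
    intro m k hmk
    rcases hmk.lt_or_gt with h | h
    · exact hdlt m k h
    · exact (hdlt k m h).symm


open UniformSpace in
/-- If a metric space `M` is unbounded or not uniformly discrete, then `M` has the seq-SLTP. -/
theorem unbounded_or_not_uniformlyDiscrete_seqSLTP (M : Type*) [MetricSpace M]
    (h : (∀ r : ℝ, 0 < r → ∃ x y : M, r < dist x y) ∨
      ¬ ∃ ε : ℝ, 0 < ε ∧ ∀ x y : M, x ≠ y → ε ≤ dist x y) :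
    SeqSLTP M := by
  have main : ∀ ε : ℝ, 0 < ε → ε ≤ 1/2 → SLTPBody M ε := by
    intro ε hε hε2
    rcases h with hUb | hND
    · exact sltp_unbounded ε hε hε2 hUb
    · push_neg at hND
      have hp : ∀ n : ℕ, ∃ x y : M, x ≠ y ∧ dist x y < 1/((n:ℝ)+1) := by
        intro n
        apply hND
        positivity
      choose x y hxy hdist using hp
      by_cases hTB : TotallyBounded (Set.range x)
      · set ξ : ℕ → Completion M := fun n => ↑(x n) with hξ
        have hTB2 : TotallyBounded (Set.range ξ) := by
          have hrc : Set.range ξ = (fun a : M => (↑a : Completion M)) '' Set.range x := by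
            rw [← Set.range_comp]
            rfl
          rw [hrc]
          exact hTB.image (Completion.uniformContinuous_coe M)
        have hK : IsCompact (closure (Set.range ξ)) :=
          TotallyBounded.isCompact_of_isClosed hTB2.closure isClosed_closure
        obtain ⟨ω, -, k, hk, hkt⟩ :=
          hK.tendsto_subseq (fun n => subset_closure (Set.mem_range_self n))
        apply sltp_cluster ε hε hε2 ω
        intro r hr
        obtain ⟨N1, hN1⟩ := (Metric.tendsto_atTop.1 hkt) (r/2) (by linarith)
        obtain ⟨N2, hN2⟩ := exists_nat_gt (2/r)
        set j := max N1 N2 with hj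
        have hdj : dist (ξ (k j)) ω < r/2 := hN1 j (le_max_left _ _)
        have hkjN : (N2:ℝ) ≤ ((k j : ℕ):ℝ) := by
          have h1 : N2 ≤ j := le_max_right _ _
          have h2 : j ≤ k j := hk.le_apply
          exact_mod_cast le_trans h1 h2
        have hsmall : 1/(((k j:ℕ):ℝ)+1) < r/2 := by
          rw [div_lt_div_iff₀ (by positivity) (by norm_num)]
          have : 2/r < (N2:ℝ) := hN2
          rw [div_lt_iff₀ hr] at this
          nlinarith
        rcases eq_or_lt_of_le (dist_nonneg :
            (0:ℝ) ≤ dist (↑(x (k j)) : Completion M) ω) with h0 | h0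
        · have hxo : (↑(x (k j)) : Completion M) = ω := eq_of_dist_eq_zero h0.symm
          refine ⟨y (k j), ?_, ?_⟩
          · have heq : dist (↑(y (k j)) : Completion M) ω = dist (y (k j)) (x (k j)) := by
              rw [← hxo, Completion.dist_eq]
            rw [heq]
            exact dist_pos.2 (Ne.symm (hxy (k j)))
          · have heq : dist (↑(y (k j)) : Completion M) ω = dist (y (k j)) (x (k j)) := by
              rw [← hxo, Completion.dist_eq]
            rw [heq, dist_comm]
            have := hdist (k j)
            linarith
        · refine ⟨x (k j), h0, ?_⟩
          have : dist (↑(x (k j)) : Completion M) ω < r/2 := hdj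
          linarith
      · rw [Metric.totallyBounded_iff] at hTB
        push_neg at hTB
        obtain ⟨η, hη, hcov⟩ := hTB
        apply sltp_separated ε hε hε2 η hη
        intro P
        obtain ⟨N, hN⟩ := exists_nat_gt (8 / (ε * η))
        set t : Set M := ↑P ∪ (x '' {n | n ≤ N}) with ht
        have htf : t.Finite := P.finite_toSet.union ((Set.finite_le_nat N).image x)
        have hns := hcov t htf
        rw [Set.not_subset] at hns
        obtain ⟨a, ha, hout⟩ := hns
        obtain ⟨n, rfl⟩ := ha
        have hout' : ∀ p ∈ t, η ≤ dist (x n) p := by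
          intro p hp
          by_contra hlt
          push_neg at hlt
          exact hout (Set.mem_biUnion hp (Metric.mem_ball.2 hlt))
        have hnN : N < n := by
          by_contra hle
          push_neg at hle
          have hmem : x n ∈ t := Or.inr ⟨n, hle, rfl⟩
          have := hout' _ hmem
          rw [dist_self] at this
          linarith
        refine ⟨x n, y n, hxy n, ?_, fun p hp => hout' p (Or.inl hp)⟩
        have h1 : dist (x n) (y n) < 1/((n:ℝ)+1) := hdist n
        have h2 : 8/(ε*η) < (N:ℝ) := hN
        have h3 : (N:ℝ) < (n:ℝ) := by exact_mod_cast hnN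
        have h4 : 1/((n:ℝ)+1) < ε*η/8 := by
          rw [div_lt_div_iff₀ (by positivity) (by norm_num)]
          rw [div_lt_iff₀ (by positivity : (0:ℝ) < ε*η)] at h2
          nlinarith
        linarith
  intro ε hε
  have hm : 0 < min ε (1/2) := lt_min hε (by norm_num)
  obtain ⟨A, hA, hAm⟩ := main (min ε (1/2)) hm (min_le_right _ _)
  refine ⟨A, hA, fun m => ?_⟩
  obtain ⟨u, hu, v, hv, huv, h1, h2⟩ := hAm m
  have hle : 1 - ε ≤ 1 - min ε (1/2) := by
    have := min_le_left ε (1/2)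
    linarith
  refine ⟨u, hu, v, hv, huv, fun x hx y hy => ?_, fun x hx y hy z hz w hw => ?_⟩
  · refine le_trans ?_ (h1 x hx y hy)
    apply mul_le_mul_of_nonneg_right hle
    positivity
  · refine le_trans ?_ (h2 x hx y hy z hz w hw)
    apply mul_le_mul_of_nonneg_right hle
    positivity
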